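/- Let G be a connected finite simple graph and let u, v be vertices of G. Then S(u,v) = {x ∈ I(u,v) : x is a cut vertex of the induced subgraph G[I(u,v)]} ∪ {u,v}. -/

import Mathlib

/-- The interval `I(u,v)`: vertices lying on some shortest `u,v`-path. -/
def SimpleGraph.interval {V : Type*} (G : SimpleGraph V) (u v : V) : Set V :=
  {x | ∃ p : G.Walk u v, p.IsPath ∧ p.length = G.dist u v ∧ x ∈ p.support}

/-- The stress interval `S(u,v)`: vertices lying on every shortest `u,v`-path
(empty if `u` and `v` are in different components). -/
def SimpleGraph.stressInterval {V : Type*} (G : SimpleGraph V) (u v : V) : Set V :=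
  {x | G.Reachable u v ∧
    ∀ p : G.Walk u v, p.IsPath → p.length = G.dist u v → x ∈ p.support}

/-- A set of vertices is stress convex if it contains the stress interval
between any two of its elements. -/
def SimpleGraph.IsStressConvex {V : Type*} (G : SimpleGraph V) (U : Set V) : Prop :=
  ∀ ⦃u⦄, u ∈ U → ∀ ⦃v⦄, v ∈ U → G.stressInterval u v ⊆ U

/-- `x` is a cut vertex of the subgraph of `G` induced by `X`: it belongs to `X` and
deleting it increases the number of connected components. -/
def SimpleGraph.IsCutVertexOfInduced {V : Type*} (G : SimpleGraph V)
    (X : Set V) (x : V) : Prop :=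
  x ∈ X ∧ Nat.card ((G.induce (X \ {x})).ConnectedComponent) >
    Nat.card ((G.induce X).ConnectedComponent)


namespace SimpleGraph
variable {V : Type*} {G : SimpleGraph V}

private lemma reach_induce_of_walk {s : Set V} :
    ∀ {a b : V} (w : G.Walk a b), (∀ z ∈ w.support, z ∈ s) →
      ∀ (ha : a ∈ s) (hb : b ∈ s), (G.induce s).Reachable ⟨a, ha⟩ ⟨b, hb⟩ := by
  intro a b w
  induction w with
  | nil => intro _ ha hb; rfl
  | @cons a c b h p ih =>
    intro hw ha hb
    have hc : c ∈ s := hw c (by simp)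
    have hadj : (G.induce s).Adj ⟨a, ha⟩ ⟨c, hc⟩ := h
    exact hadj.reachable.trans (ih (fun z hz => hw z (by simp [hz])) hc hb)

private lemma walk_of_reach_induce {s : Set V} {a b : V} {ha : a ∈ s} {hb : b ∈ s}
    (hr : (G.induce s).Reachable ⟨a, ha⟩ ⟨b, hb⟩) :
    ∃ w : G.Walk a b, ∀ z ∈ w.support, z ∈ s := by
  obtain ⟨q⟩ := hr
  refine ⟨q.map (Embedding.induce s).toHom, ?_⟩
  intro z hz
  change z ∈ (q.map (Embedding.induce s).toHom).support at hz
  rw [Walk.support_map, List.mem_map] at hz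
  obtain ⟨⟨z', hz'⟩, _, rfl⟩ := hz
  exact hz'

private lemma card_cc_eq_one {W : Type*} {H : SimpleGraph W} (h : H.Connected) :
    Nat.card H.ConnectedComponent = 1 := by
  rw [Nat.card_eq_one_iff_unique]
  constructor
  · constructor
    intro c d
    refine ConnectedComponent.ind₂ (fun a b => ?_) c d
    exact ConnectedComponent.sound (h.preconnected a b)
  · exact ⟨H.connectedComponentMk (Classical.choice h.nonempty)⟩

private lemma one_lt_card_cc {W : Type*} [Finite W] {H : SimpleGraph W} {a b : W}
    (hne : ¬ H.Reachable a b) : 1 < Nat.card H.ConnectedComponent := by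
  rw [Finite.one_lt_card_iff_nontrivial]
  exact ⟨H.connectedComponentMk a, H.connectedComponentMk b,
    fun hc => hne (ConnectedComponent.exact hc)⟩

/-- splitting a shortest path at a support vertex gives shortest subpaths. -/
private lemma split_dist [DecidableEq V] (hG : G.Connected) {u v : V} {p : G.Walk u v}
    (hl : p.length = G.dist u v) {y : V} (hy : y ∈ p.support) :
    (p.takeUntil y hy).length = G.dist u y ∧ (p.dropUntil y hy).length = G.dist y v := by
  have h1 : G.dist u y ≤ (p.takeUntil y hy).length := dist_le _
  have h2 : G.dist y v ≤ (p.dropUntil y hy).length := dist_le _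
  have h3 : (p.takeUntil y hy).length + (p.dropUntil y hy).length = p.length := by
    rw [← Walk.length_append, p.take_spec hy]
  have h4 : G.dist u v ≤ G.dist u y + G.dist y v := hG.dist_triangle
  omega

private lemma sum_dist [DecidableEq V] (hG : G.Connected) {u v : V} {p : G.Walk u v}
    (hl : p.length = G.dist u v) {y : V} (hy : y ∈ p.support) :
    G.dist u y + G.dist y v = G.dist u v := by
  obtain ⟨h1, h2⟩ := split_dist hG hl hy
  have h3 : (p.takeUntil y hy).length + (p.dropUntil y hy).length = p.length := by
    rw [← Walk.length_append, p.take_spec hy]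
  omega

/-- uniqueness of the vertex at a given level for a stress vertex -/
private lemma level_unique [DecidableEq V] (hG : G.Connected) {u v x y : V}
    (hx : x ∈ G.stressInterval u v) (hy : y ∈ G.interval u v)
    (hk : G.dist u y = G.dist u x) : y = x := by
  obtain ⟨q, hq, hql, hyq⟩ := hy
  have hxq : x ∈ q.support := hx.2 q hq hql
  have hsplit := split_dist hG hql hyq
  rw [← q.take_spec hyq, Walk.mem_support_append_iff] at hxq
  rcases hxq with hxt | hxd
  · -- x on the u-y part
    have hsum : G.dist u x + G.dist x y = G.dist u y :=
      sum_dist hG hsplit.1 hxt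
    have h0 : G.dist x y = 0 := by omega
    exact ((hG.dist_eq_zero_iff).mp h0).symm
  · -- x on the y-v part
    have hsum : G.dist y x + G.dist x v = G.dist y v :=
      sum_dist hG hsplit.2 hxd
    have hsum2 : G.dist u y + G.dist y v = G.dist u v := sum_dist hG hql hyq
    have hx' : x ∈ q.support := hx.2 q hq hql
    have hsum3 : G.dist u x + G.dist x v = G.dist u v := sum_dist hG hql hx'
    have h0 : G.dist y x = 0 := by omega
    exact (hG.dist_eq_zero_iff).mp h0

/-- intermediate value for distance along a walk -/
private lemma exists_dist_eq (hG : G.Connected) (u : V) (k : ℕ) :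
    ∀ {a b : V} (w : G.Walk a b), G.dist u a ≤ k → k ≤ G.dist u b →
      ∃ z ∈ w.support, G.dist u z = k := by
  intro a b w
  induction w with
  | nil => intro h1 h2; exact ⟨_, by simp, le_antisymm h1 h2⟩
  | @cons a' c' b' h p ih =>
    intro h1 h2
    rcases eq_or_lt_of_le h1 with heq | hlt
    · exact ⟨a', by simp, heq⟩
    · have hac : G.dist a' c' ≤ 1 := by
        have := dist_le (Walk.cons h Walk.nil)
        simpa using this
      have htri : G.dist u c' ≤ G.dist u a' + G.dist a' c' := hG.dist_triangle
      have hc : G.dist u c' ≤ k := by omega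
      obtain ⟨z, hz, hzk⟩ := ih hc h2
      exact ⟨z, by simp [hz], hzk⟩

end SimpleGraph

theorem stressInterval_eq_cutVertices_union {V : Type*} [Fintype V]
    (G : SimpleGraph V) (hG : G.Connected) (u v : V) :
    G.stressInterval u v =
      {x | x ∈ G.interval u v ∧ G.IsCutVertexOfInduced (G.interval u v) x}
        ∪ {u, v} := by
  classical
  set I := G.interval u v with hI
  obtain ⟨p0, hp0, hp0l⟩ := hG.exists_path_of_dist u v
  have hsubI : ∀ {p : G.Walk u v}, p.IsPath → p.length = G.dist u v →
      ∀ z ∈ p.support, z ∈ I := fun hp hl z hz => ⟨_, hp, hl, hz⟩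
  have huI : u ∈ I := hsubI hp0 hp0l u p0.start_mem_support
  have hvI : v ∈ I := hsubI hp0 hp0l v p0.end_mem_support
  -- every vertex of I reaches u inside G[I]
  have hreachI : ∀ y (hy : y ∈ I), (G.induce I).Reachable ⟨y, hy⟩ ⟨u, huI⟩ := by
    intro y hy
    obtain ⟨q, hq, hql, hyq⟩ := id hy
    have hsub : ∀ z ∈ (q.takeUntil y hyq).support, z ∈ I :=
      fun z hz => hsubI hq hql z (q.support_takeUntil_subset hyq hz)
    exact (SimpleGraph.reach_induce_of_walk _ hsub huI hy).symm
  have hIconn : (G.induce I).Connected := by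
    rw [SimpleGraph.connected_iff]
    refine ⟨fun a b => ?_, ⟨⟨u, huI⟩⟩⟩
    exact (hreachI a.1 a.2).trans (hreachI b.1 b.2).symm
  have hIcard : Nat.card (G.induce I).ConnectedComponent = 1 :=
    SimpleGraph.card_cc_eq_one hIconn
  ext x
  simp only [Set.mem_union, Set.mem_setOf_eq, Set.mem_insert_iff, Set.mem_singleton_iff]
  constructor
  · intro hx
    by_cases hxuv : x = u ∨ x = v
    · exact Or.inr hxuv
    push_neg at hxuv
    obtain ⟨hxu, hxv⟩ := hxuv
    left
    have hxp0 : x ∈ p0.support := hx.2 p0 hp0 hp0l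
    have hxI : x ∈ I := hsubI hp0 hp0l x hxp0
    refine ⟨hxI, hxI, ?_⟩
    have hsum : G.dist u x + G.dist x v = G.dist u v :=
      SimpleGraph.sum_dist hG hp0l hxp0
    have hkx : G.dist u x ≤ G.dist u v := by omega
    have huI' : u ∈ I \ {x} := ⟨huI, fun h => hxu (Set.mem_singleton_iff.mp h).symm⟩
    have hvI' : v ∈ I \ {x} := ⟨hvI, fun h => hxv (Set.mem_singleton_iff.mp h).symm⟩
    have hnr : ¬ (G.induce (I \ {x})).Reachable ⟨u, huI'⟩ ⟨v, hvI'⟩ := by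
      intro hr
      obtain ⟨w, hw⟩ := SimpleGraph.walk_of_reach_induce hr
      obtain ⟨z, hzw, hzk⟩ := SimpleGraph.exists_dist_eq hG u (G.dist u x) w
        (by rw [SimpleGraph.dist_self]; exact Nat.zero_le _) hkx
      have hzI : z ∈ I \ {x} := hw z hzw
      have : z = x := SimpleGraph.level_unique hG hx hzI.1 hzk
      exact hzI.2 (by simp [this])
    rw [gt_iff_lt, hIcard]
    exact SimpleGraph.one_lt_card_cc hnr
  · rintro (⟨hxI, -, hcard⟩ | hxuv)
    · -- cut vertex case
      refine ⟨hG.preconnected u v, ?_⟩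
      intro p hp hpl
      by_contra hxp
      -- show G[I \ {x}] is connected, contradiction
      have hxu : x ≠ u := fun h => hxp (h ▸ p.start_mem_support)
      have hsubp : ∀ z ∈ p.support, z ∈ I \ {x} :=
        fun z hz => ⟨hsubI hp hpl z hz, fun hzx => hxp (by simpa [Set.mem_singleton_iff.mp hzx] using hz)⟩
      have huI' : u ∈ I \ {x} := hsubp u p.start_mem_support
      have hvI' : v ∈ I \ {x} := hsubp v p.end_mem_support
      have hreach' : ∀ y (hy : y ∈ I \ {x}),
          (G.induce (I \ {x})).Reachable ⟨y, hy⟩ ⟨u, huI'⟩ := by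
        intro y hy
        obtain ⟨hyI, hyx⟩ := id hy
        have hyx' : x ≠ y := fun h => hyx (by simp [h.symm])
        obtain ⟨q, hq, hql, hyq⟩ := id hyI
        by_cases hxq : x ∈ (q.takeUntil y hyq).support
        · -- x on u-y part; use the y-v part then p.reverse
          have hxd : x ∉ (q.dropUntil y hyq).support := by
            intro hxd
            have hnodup := hq.support_nodup
            rw [← q.take_spec hyq, SimpleGraph.Walk.support_append] at hnodup
            have hdisj := List.disjoint_of_nodup_append hnodup
            have : x ∈ ((q.dropUntil y hyq).support).tail := by
              have := (q.dropUntil y hyq).support_eq_cons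
              rw [this] at hxd
              rcases List.mem_cons.mp hxd with h | h
              · exact absurd h.symm hyx'.symm
              · exact h
            exact hdisj hxq this
          have hsubd : ∀ z ∈ (q.dropUntil y hyq).support, z ∈ I \ {x} :=
            fun z hz => ⟨hsubI hq hql z (q.support_dropUntil_subset hyq hz),
              fun hzx => hxd (by simpa [Set.mem_singleton_iff.mp hzx] using hz)⟩
          have r1 : (G.induce (I \ {x})).Reachable ⟨y, hy⟩ ⟨v, hvI'⟩ :=
            SimpleGraph.reach_induce_of_walk _ hsubd _ _
          have r2 : (G.induce (I \ {x})).Reachable ⟨u, huI'⟩ ⟨v, hvI'⟩ :=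
            SimpleGraph.reach_induce_of_walk p hsubp _ _
          exact r1.trans r2.symm
        · have hsubt : ∀ z ∈ (q.takeUntil y hyq).support, z ∈ I \ {x} :=
            fun z hz => ⟨hsubI hq hql z (q.support_takeUntil_subset hyq hz),
              fun hzx => hxq (by simpa [Set.mem_singleton_iff.mp hzx] using hz)⟩
          exact (SimpleGraph.reach_induce_of_walk _ hsubt _ _).symm
      have hconn' : (G.induce (I \ {x})).Connected := by
        rw [SimpleGraph.connected_iff]
        refine ⟨fun a b => ?_, ⟨⟨u, huI'⟩⟩⟩
        exact (hreach' a.1 a.2).trans (hreach' b.1 b.2).symm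
      have h1 : Nat.card (G.induce (I \ {x})).ConnectedComponent = 1 :=
        SimpleGraph.card_cc_eq_one hconn'
      rw [gt_iff_lt, hIcard, h1] at hcard
      exact lt_irrefl 1 hcard
    · -- x = u or x = v
      refine ⟨hG.preconnected u v, ?_⟩
      intro p hp hpl
      rcases hxuv with rfl | rfl
      · exact p.start_mem_support
      · exact p.end_mem_support
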